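/- Let f : [0,y] → ℝ be continuous with f(0) = 0 < f(y), and suppose f is α-concave, i.e. the function x ↦ f(x) + αx² is concave on [0,y], with α ≥ 0. Let x ∈ (0,y) satisfy 0 < f(x) < f(y). Then ((f(y) - f(x))/f(x)) · (x/(y-x)) ≤ f(y)/(f(y) + αy²). -/
import Mathlib


open Set

/-- Lemma 2 (fratio-inc): for an α-concave map `f` on `[0,y]` with `f 0 = 0 < f y`
and `x ∈ (0,y)` with `0 < f x < f y`, we have
`κ(f x, f y)/κ(x,y) = ((f y - f x)/f x)·(x/(y-x)) ≤ f y / (f y + α y²)`. -/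
theorem fratio_inc (y α : ℝ) (f : ℝ → ℝ) (hy : 0 < y)
    (hcont : ContinuousOn f (Icc 0 y))
    (hα : 0 ≤ α)
    (hconc : ConcaveOn ℝ (Icc 0 y) (fun x => f x + α * x ^ 2))
    (hf0 : f 0 = 0) (hfy : 0 < f y)
    (x : ℝ) (hx : x ∈ Ioo 0 y) (hfx : 0 < f x) (hfxy : f x < f y) :
    (f y - f x) / f x * (x / (y - x)) ≤ f y / (f y + α * y ^ 2) := by
  obtain ⟨hx0, hxy⟩ := hx
  have h0mem : (0 : ℝ) ∈ Icc 0 y := ⟨le_refl 0, hy.le⟩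
  have hymem : y ∈ Icc 0 y := ⟨hy.le, le_refl y⟩
  have ha : (0 : ℝ) ≤ 1 - x / y := by
    have : x / y ≤ 1 := by
      rw [div_le_one hy]; exact hxy.le
    linarith
  have hb : (0 : ℝ) ≤ x / y := by positivity
  have hab : (1 - x / y) + x / y = 1 := by ring
  have hkey := hconc.2 h0mem hymem ha hb hab
  simp only [smul_eq_mul, mul_zero, zero_add, hf0] at hkey
  have hxy' : x / y * y = x := div_mul_cancel₀ x hy.ne'
  rw [hxy'] at hkey
  have hkey' : (x / y) * (f y + α * y ^ 2) ≤ f x + α * x ^ 2 := by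
    nlinarith [hkey]
  have hden : 0 < f y + α * y ^ 2 := by positivity
  have hyx : 0 < y - x := by linarith
  rw [div_mul_div_comm, div_le_div_iff₀ (by positivity) hden]
  have hkey'' : x * (f y + α * y ^ 2) ≤ y * (f x + α * x ^ 2) := by
    have := mul_le_mul_of_nonneg_left hkey' hy.le
    rw [mul_comm (x / y)] at this
    field_simp at this
    nlinarith [this]
  have hAyBx : x * f y ≤ y * f x := by nlinarith [hkey'', mul_nonneg (mul_nonneg (mul_nonneg hα hx0.le) hy.le) hyx.le]
  nlinarith [mul_le_mul_of_nonneg_left hkey'' hfy.le,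
    mul_le_mul_of_nonneg_left hAyBx (by positivity : (0:ℝ) ≤ α * x * y)]
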